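/- Let A be a nonnegative selfadjoint operator on K and V : M → K a contraction. Then for each λ ∈ ℂ \ [0,∞), the bounded operator Q(λ) = I_M + (1+λ) V*(A - λI)⁻¹V satisfies Q(-1) = I_M, and the map x ↦ ⟪Q(x)f, f⟫ is real-valued and nondecreasing for x ∈ (-∞, 0) for every f ∈ M. -/
import Mathlib


open scoped ComplexOrder ComplexInnerProductSpace LinearPMap

lemma stmt_7_inner_self {E : Type*} [NormedAddCommGroup E] [InnerProductSpace ℂ E] (v : E) :
    (⟪v, v⟫ : ℂ) = ((‖v‖ ^ 2 : ℝ) : ℂ) := by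
  rw [inner_self_eq_norm_sq_to_K]
  norm_cast

/-- Let `A` be a nonnegative selfadjoint operator on `K` (resolvents encoded by `R`)
and `V : M → K` a contraction.  Then `Q(λ) = I + (1+λ)V*(A-λ)⁻¹V` satisfies
`Q(-1) = I`, and `x ↦ ⟪Q(x)f,f⟫` is real-valued and nondecreasing on `(-∞,0)`. -/
theorem stmt_7 {M K : Type*} [NormedAddCommGroup M] [InnerProductSpace ℂ M] [CompleteSpace M]
    [NormedAddCommGroup K] [InnerProductSpace ℂ K] [CompleteSpace K]
    (A : K →ₗ.[ℂ] K) (hsa : IsSelfAdjoint A)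
    (hnn : ∀ x : A.domain, 0 ≤ ⟪A x, (x : K)⟫)
    (V : M →L[ℂ] K) (hV : ‖V‖ ≤ 1)
    (R : ℂ → (K →L[ℂ] K))
    (hR : ∀ lam : ℂ, ¬(lam.im = 0 ∧ 0 ≤ lam.re) →
      (∀ y : K, ∃ h : R lam y ∈ A.domain, A ⟨R lam y, h⟩ - lam • R lam y = y) ∧
      (∀ x : A.domain, R lam (A x - lam • (x : K)) = x))
    (Q : ℂ → (M →L[ℂ] M))
    (hQ : ∀ lam : ℂ, Q lam = 1 + (1 + lam) • (V.adjoint ∘L R lam ∘L V)) :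
    Q (-1) = 1 ∧
    ∀ f : M,
      (∀ x : ℝ, x < 0 → (⟪Q (x : ℂ) f, f⟫).im = 0) ∧
      MonotoneOn (fun x : ℝ => (⟪Q (x : ℂ) f, f⟫).re) (Set.Iio (0 : ℝ)) := by
  -- symmetry of A
  have hsym : ∀ p q : A.domain, ⟪A p, (q : K)⟫ = ⟪(p : K), A q⟫ := by
    have h := LinearPMap.adjoint_isFormalAdjoint hsa.dense_domain
    rwa [LinearPMap.isSelfAdjoint_def.mp hsa] at h
  have hlam : ∀ x : ℝ, x < 0 → ¬(((x : ℂ)).im = 0 ∧ 0 ≤ ((x : ℂ)).re) := by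
    intro x hx h
    simp only [Complex.ofReal_re] at h
    linarith [h.2]
  -- membership and action of A on resolvent values
  have hmem : ∀ (x : ℝ), x < 0 → ∀ z : K,
      ∃ h : R (x : ℂ) z ∈ A.domain, A ⟨R (x : ℂ) z, h⟩ = z + (x : ℂ) • R (x : ℂ) z := by
    intro x hx z
    obtain ⟨h, he⟩ := (hR (x : ℂ) (hlam x hx)).1 z
    exact ⟨h, eq_add_of_sub_eq he⟩
  -- nonnegativity gives real values on the diagonal
  have hreal : ∀ (v : K) (hv : v ∈ A.domain),
      ∃ b : ℝ, 0 ≤ b ∧ ⟪A ⟨v, hv⟩, v⟫ = (b : ℂ) := by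
    intro v hv
    have h := hnn ⟨v, hv⟩
    rw [Complex.le_def] at h
    refine ⟨(⟪A ⟨v, hv⟩, v⟫).re, by simpa using h.1, ?_⟩
    apply Complex.ext
    · simp
    · simp [← h.2]
  refine ⟨by rw [hQ]; norm_num, fun f => ?_⟩
  set g : K := V f with hg
  -- the basic diagonal value of the resolvent quadratic form
  have hpoint : ∀ x : ℝ, x < 0 → ∀ (hu : R (x : ℂ) g ∈ A.domain),
      ∀ b : ℝ, ⟪A ⟨R (x : ℂ) g, hu⟩, R (x : ℂ) g⟫ = (b : ℂ) →
        ⟪R (x : ℂ) g, g⟫ = ((b - x * ‖R (x : ℂ) g‖ ^ 2 : ℝ) : ℂ) := by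
    intro x hx hu b hb
    obtain ⟨hu', hAu⟩ := hmem x hx g
    have hAu' : A ⟨R (x : ℂ) g, hu⟩ = g + (x : ℂ) • R (x : ℂ) g := hAu
    have hg' : g = A ⟨R (x : ℂ) g, hu⟩ - (x : ℂ) • R (x : ℂ) g := by rw [hAu']; abel
    calc ⟪R (x : ℂ) g, g⟫
        = ⟪R (x : ℂ) g, A ⟨R (x : ℂ) g, hu⟩ - (x : ℂ) • R (x : ℂ) g⟫ :=
          congrArg (fun t => (⟪R (x : ℂ) g, t⟫ : ℂ)) hg'
      _ = ⟪R (x : ℂ) g, A ⟨R (x : ℂ) g, hu⟩⟫ - (x : ℂ) * ⟪R (x : ℂ) g, R (x : ℂ) g⟫ := by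
          rw [inner_sub_right, inner_smul_right]
      _ = (b : ℂ) - (x : ℂ) * ((‖R (x : ℂ) g‖ ^ 2 : ℝ) : ℂ) := by
          rw [← hsym ⟨R (x : ℂ) g, hu⟩ ⟨R (x : ℂ) g, hu⟩, hb, stmt_7_inner_self (R (x : ℂ) g)]
      _ = ((b - x * ‖R (x : ℂ) g‖ ^ 2 : ℝ) : ℂ) := by push_cast; ring
  -- value of the quadratic form of Q
  have hQval : ∀ x : ℝ, x < 0 →
      ⟪Q (x : ℂ) f, f⟫ = ((‖f‖ ^ 2 : ℝ) : ℂ) + ((1 + x : ℝ) : ℂ) * ⟪R (x : ℂ) g, g⟫ := by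
    intro x hx
    rw [hQ]
    simp only [ContinuousLinearMap.add_apply, ContinuousLinearMap.one_apply,
      ContinuousLinearMap.smul_apply, ContinuousLinearMap.comp_apply]
    rw [inner_add_left, inner_smul_left, ContinuousLinearMap.adjoint_inner_left, ← hg,
      stmt_7_inner_self f]
    have hc : (starRingEnd ℂ) (1 + (x : ℂ)) = ((1 + x : ℝ) : ℂ) := by
      push_cast
      rw [map_add, Complex.conj_ofReal]
      simp
    rw [hc]
  have hQreal : ∀ x : ℝ, x < 0 → ∀ (hu : R (x : ℂ) g ∈ A.domain),
      ∀ b : ℝ, ⟪A ⟨R (x : ℂ) g, hu⟩, R (x : ℂ) g⟫ = (b : ℂ) →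
      ⟪Q (x : ℂ) f, f⟫
        = ((‖f‖ ^ 2 + (1 + x) * (b - x * ‖R (x : ℂ) g‖ ^ 2) : ℝ) : ℂ) := by
    intro x hx hu b hb
    rw [hQval x hx, hpoint x hx hu b hb]
    push_cast
    ring
  constructor
  · intro x hx
    obtain ⟨hu, -⟩ := hmem x hx g
    obtain ⟨b, -, hb⟩ := hreal (R (x : ℂ) g) hu
    rw [hQreal x hx hu b hb, Complex.ofReal_im]
  -- monotonicity
  intro x hx y hy hxy
  simp only [Set.mem_Iio] at hx hy
  obtain ⟨hu, hAu⟩ := hmem x hx g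
  obtain ⟨hw, hAw⟩ := hmem y hy (R (x : ℂ) g)
  obtain ⟨b, hb0, hbA⟩ := hreal (R (x : ℂ) g) hu
  obtain ⟨α, hα0, hα⟩ := hreal (R (y : ℂ) (R (x : ℂ) g)) hw
  -- resolvent identity : R y g = u + (y - x) • w
  have hres : R (y : ℂ) g = R (x : ℂ) g + ((y : ℂ) - (x : ℂ)) • R (y : ℂ) (R (x : ℂ) g) := by
    have hzK : ((⟨R (x : ℂ) g, hu⟩ + ((y : ℂ) - (x : ℂ)) • ⟨R (y : ℂ) (R (x : ℂ) g), hw⟩ :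
        A.domain) : K)
        = R (x : ℂ) g + ((y : ℂ) - (x : ℂ)) • R (y : ℂ) (R (x : ℂ) g) := by simp
    have hAz : A (⟨R (x : ℂ) g, hu⟩ + ((y : ℂ) - (x : ℂ)) • ⟨R (y : ℂ) (R (x : ℂ) g), hw⟩)
        = A ⟨R (x : ℂ) g, hu⟩ + ((y : ℂ) - (x : ℂ)) • A ⟨R (y : ℂ) (R (x : ℂ) g), hw⟩ := by
      rw [A.map_add, A.map_smul]
    have h2 := (hR (y : ℂ) (hlam y hy)).2
      (⟨R (x : ℂ) g, hu⟩ + ((y : ℂ) - (x : ℂ)) • ⟨R (y : ℂ) (R (x : ℂ) g), hw⟩)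
    rw [hAz, hzK, hAu, hAw] at h2
    have hval : (g + (x : ℂ) • R (x : ℂ) g)
        + ((y : ℂ) - (x : ℂ)) • (R (x : ℂ) g + (y : ℂ) • R (y : ℂ) (R (x : ℂ) g))
        - (y : ℂ) • (R (x : ℂ) g + ((y : ℂ) - (x : ℂ)) • R (y : ℂ) (R (x : ℂ) g)) = g := by
      module
    rw [hval] at h2
    exact h2
  -- ⟪w, u⟫ = σ (real and nonnegative)
  set σ : ℝ := α - y * ‖R (y : ℂ) (R (x : ℂ) g)‖ ^ 2 with hσ_def
  have hwu : ⟪R (y : ℂ) (R (x : ℂ) g), R (x : ℂ) g⟫ = (σ : ℂ) := by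
    have hu' : R (x : ℂ) g = A ⟨R (y : ℂ) (R (x : ℂ) g), hw⟩
        - (y : ℂ) • R (y : ℂ) (R (x : ℂ) g) := by rw [hAw]; abel
    calc ⟪R (y : ℂ) (R (x : ℂ) g), R (x : ℂ) g⟫
        = ⟪R (y : ℂ) (R (x : ℂ) g), A ⟨R (y : ℂ) (R (x : ℂ) g), hw⟩
            - (y : ℂ) • R (y : ℂ) (R (x : ℂ) g)⟫ :=
          congrArg (fun t => (⟪R (y : ℂ) (R (x : ℂ) g), t⟫ : ℂ)) hu'
      _ = ⟪R (y : ℂ) (R (x : ℂ) g), A ⟨R (y : ℂ) (R (x : ℂ) g), hw⟩⟫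
          - (y : ℂ) * ⟪R (y : ℂ) (R (x : ℂ) g), R (y : ℂ) (R (x : ℂ) g)⟫ := by
          rw [inner_sub_right, inner_smul_right]
      _ = (α : ℂ) - (y : ℂ) * ((‖R (y : ℂ) (R (x : ℂ) g)‖ ^ 2 : ℝ) : ℂ) := by
          rw [← hsym ⟨R (y : ℂ) (R (x : ℂ) g), hw⟩ ⟨R (y : ℂ) (R (x : ℂ) g), hw⟩, hα,
            stmt_7_inner_self (R (y : ℂ) (R (x : ℂ) g))]
      _ = (σ : ℂ) := by rw [hσ_def]; push_cast; ring
  have hσ0 : 0 ≤ σ := by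
    have h1 : 0 ≤ -y * ‖R (y : ℂ) (R (x : ℂ) g)‖ ^ 2 := mul_nonneg (by linarith) (sq_nonneg _)
    rw [hσ_def]; nlinarith
  have hσw : -y * ‖R (y : ℂ) (R (x : ℂ) g)‖ ^ 2 ≤ σ := by rw [hσ_def]; nlinarith
  -- Cauchy–Schwarz
  have hCS : σ ^ 2 ≤ ‖R (x : ℂ) g‖ ^ 2 * ‖R (y : ℂ) (R (x : ℂ) g)‖ ^ 2 := by
    have h1 : σ ≤ ‖(⟪R (y : ℂ) (R (x : ℂ) g), R (x : ℂ) g⟫ : ℂ)‖ := by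
      rw [hwu, Complex.norm_real]
      exact le_abs_self σ
    have h2 : ‖(⟪R (y : ℂ) (R (x : ℂ) g), R (x : ℂ) g⟫ : ℂ)‖
        ≤ ‖R (y : ℂ) (R (x : ℂ) g)‖ * ‖R (x : ℂ) g‖ := norm_inner_le_norm _ _
    nlinarith
  -- key inequality : ‖u‖² ≥ -y σ
  have hUσ : -y * σ ≤ ‖R (x : ℂ) g‖ ^ 2 := by
    rcases eq_or_lt_of_le hσ0 with h | h
    · nlinarith [sq_nonneg ‖R (x : ℂ) g‖]
    · nlinarith [mul_le_mul_of_nonneg_left hσw (le_of_lt (neg_pos.mpr hy)),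
        mul_le_mul_of_nonneg_left hCS (le_of_lt (neg_pos.mpr hy))]
  -- compute ⟪w, g⟫
  have hwg : ⟪R (y : ℂ) (R (x : ℂ) g), g⟫ = ((‖R (x : ℂ) g‖ ^ 2 + (y - x) * σ : ℝ) : ℂ) := by
    have hg' : g = A ⟨R (x : ℂ) g, hu⟩ - (x : ℂ) • R (x : ℂ) g := by rw [hAu]; abel
    have hAwu : ⟪R (y : ℂ) (R (x : ℂ) g), A ⟨R (x : ℂ) g, hu⟩⟫
        = ((‖R (x : ℂ) g‖ ^ 2 + y * σ : ℝ) : ℂ) := by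
      have hs : ⟪(A ⟨R (y : ℂ) (R (x : ℂ) g), hw⟩ : K), R (x : ℂ) g⟫
          = ⟪R (y : ℂ) (R (x : ℂ) g), A ⟨R (x : ℂ) g, hu⟩⟫ :=
        hsym ⟨R (y : ℂ) (R (x : ℂ) g), hw⟩ ⟨R (x : ℂ) g, hu⟩
      rw [← hs, hAw, inner_add_left, inner_smul_left, stmt_7_inner_self (R (x : ℂ) g), hwu,
        Complex.conj_ofReal]
      push_cast
      ring
    calc ⟪R (y : ℂ) (R (x : ℂ) g), g⟫
        = ⟪R (y : ℂ) (R (x : ℂ) g), A ⟨R (x : ℂ) g, hu⟩ - (x : ℂ) • R (x : ℂ) g⟫ :=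
          congrArg (fun t => (⟪R (y : ℂ) (R (x : ℂ) g), t⟫ : ℂ)) hg'
      _ = ⟪R (y : ℂ) (R (x : ℂ) g), A ⟨R (x : ℂ) g, hu⟩⟫
          - (x : ℂ) * ⟪R (y : ℂ) (R (x : ℂ) g), R (x : ℂ) g⟫ := by
          rw [inner_sub_right, inner_smul_right]
      _ = ((‖R (x : ℂ) g‖ ^ 2 + (y - x) * σ : ℝ) : ℂ) := by
          rw [hAwu, hwu]
          push_cast
          ring
  -- value at y
  have hyval : ⟪R (y : ℂ) g, g⟫
      = (((b - x * ‖R (x : ℂ) g‖ ^ 2)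
          + (y - x) * (‖R (x : ℂ) g‖ ^ 2 + (y - x) * σ) : ℝ) : ℂ) := by
    rw [hres, inner_add_left, inner_smul_left, hwg, hpoint x hx hu b hbA]
    have hc : (starRingEnd ℂ) ((y : ℂ) - (x : ℂ)) = (((y - x : ℝ)) : ℂ) := by
      push_cast
      rw [map_sub, Complex.conj_ofReal, Complex.conj_ofReal]
    rw [hc]
    push_cast
    ring
  have hyQ : ⟪Q (y : ℂ) f, f⟫
      = ((‖f‖ ^ 2 + (1 + y) * ((b - x * ‖R (x : ℂ) g‖ ^ 2)
          + (y - x) * (‖R (x : ℂ) g‖ ^ 2 + (y - x) * σ)) : ℝ) : ℂ) := by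
    rw [hQval y hy, hyval]
    push_cast
    ring
  have hxQ : ⟪Q (x : ℂ) f, f⟫
      = ((‖f‖ ^ 2 + (1 + x) * (b - x * ‖R (x : ℂ) g‖ ^ 2) : ℝ) : ℂ) :=
    hQreal x hx hu b hbA
  simp only [hxQ, hyQ, Complex.ofReal_re]
  have key : (1 + y) * ((b - x * ‖R (x : ℂ) g‖ ^ 2)
        + (y - x) * (‖R (x : ℂ) g‖ ^ 2 + (y - x) * σ))
        - (1 + x) * (b - x * ‖R (x : ℂ) g‖ ^ 2)
      = (y - x) * (b - x * σ)
        + ((y - x) * (1 + y - x)) * (‖R (x : ℂ) g‖ ^ 2 + y * σ) := by ring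
  have h1 : 0 ≤ (y - x) * (b - x * σ) :=
    mul_nonneg (by linarith) (by nlinarith)
  have h2 : 0 ≤ ((y - x) * (1 + y - x)) * (‖R (x : ℂ) g‖ ^ 2 + y * σ) :=
    mul_nonneg (mul_nonneg (by linarith) (by linarith)) (by linarith)
  linarith [key, h1, h2]
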